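/- Moyal identity: let x, ψ ∈ L²(ℝ), and for (τ,ν) ∈ ℝ² define the short-time Fourier transform V_ψx(τ,ν) = ∫_ℝ x(t) · conj(ψ(t−τ)) · e^{-2πiνt} dt (the integrand is integrable for every (τ,ν) by the Cauchy–Schwarz inequality). Then ∫_ℝ ∫_ℝ |V_ψx(τ,ν)|² dν dτ = ‖x‖²_{L²} · ‖ψ‖²_{L²}. -/

import Mathlib

open MeasureTheory

/-- The short-time Fourier transform `V_ψx(τ,ν) = ∫ x(t) conj(ψ(t-τ)) e^{-2πiνt} dt`. -/
noncomputable def stft (ψ x : ℝ → ℂ) (τ ν : ℝ) : ℂ :=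
  ∫ t : ℝ, x t * (starRingEnd ℂ) (ψ (t - τ)) *
    Complex.exp (-2 * Real.pi * Complex.I * ν * t)

open Complex Real FourierTransform Filter
open scoped Topology ComplexConjugate


lemma memLp_conj {f : ℝ → ℂ} (hf : MemLp f 2 (volume : Measure ℝ)) :
    MemLp (fun t => conj (f t)) 2 (volume : Measure ℝ) :=
  MemLp.of_le hf (Complex.continuous_conj.comp_aestronglyMeasurable hf.1)
    (Filter.Eventually.of_forall fun x => by simp)

lemma memLp_shift {f : ℝ → ℂ} (hf : MemLp f 2 (volume : Measure ℝ)) (τ : ℝ) :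
    MemLp (fun t => f (t - τ)) 2 (volume : Measure ℝ) :=
  hf.comp_measurePreserving (measurePreserving_sub_right volume τ)

lemma integrable_mul_L2 {f g : ℝ → ℂ} (hf : MemLp f 2 (volume : Measure ℝ))
    (hg : MemLp g 2 (volume : Measure ℝ)) :
    Integrable (fun t => f t * g t) := by
  haveI : Fact ((1:ENNReal) ≤ 2) := ⟨one_le_two⟩
  have hconj := memLp_conj hf
  have h := MeasureTheory.L2.integrable_inner (𝕜 := ℂ)
    (hconj.toLp _) (hg.toLp _)
  refine h.congr ?_
  filter_upwards [hconj.coeFn_toLp, hg.coeFn_toLp] with t h1 h2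
  simp [h1, h2, RCLike.inner_apply, mul_comm]

lemma continuous_autocorr {f : ℝ → ℂ} (hf2 : MemLp f 2 (volume : Measure ℝ)) :
    Continuous fun v : ℝ => ∫ t : ℝ, f t * (starRingEnd ℂ) (f (t - v)) := by
  haveI : Fact ((1:ENNReal) ≤ 2) := ⟨one_le_two⟩
  set G : Lp ℂ 2 (volume : Measure ℝ) := hf2.toLp f with hG
  have hC : Continuous fun v : ℝ =>
      (⟨ContinuousMap.mk (fun t : ℝ => t - v) (by continuity),
        measurePreserving_sub_right volume v⟩ :
        {φ : C(ℝ, ℝ) // MeasurePreserving φ volume volume}) := by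
    refine Continuous.subtype_mk ?_ _
    exact ContinuousMap.continuous_of_continuous_uncurry _ (continuous_snd.sub continuous_fst)
  have hT : Continuous fun v : ℝ =>
      Lp.compMeasurePreserving (fun t : ℝ => t - v)
        (measurePreserving_sub_right volume v) G :=
    (Lp.compMeasurePreserving_continuous (volume : Measure ℝ) (volume : Measure ℝ) ℂ
      (p := 2) (by norm_num)).comp (continuous_const.prodMk hC)
  have key : Continuous fun v : ℝ =>
      (inner ℂ (Lp.compMeasurePreserving (fun t : ℝ => t - v)
        (measurePreserving_sub_right volume v) G) G : ℂ) :=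
    continuous_inner.comp (hT.prodMk continuous_const)
  refine Continuous.congr key fun v => ?_
  rw [L2.inner_def]
  refine integral_congr_ae ?_
  have h1 := Lp.coeFn_compMeasurePreserving G (measurePreserving_sub_right volume v)
  have h2 : (G : ℝ → ℂ) =ᵐ[volume] f := hf2.coeFn_toLp
  have h3 : ((G : ℝ → ℂ) ∘ (fun t : ℝ => t - v)) =ᵐ[volume] (fun t : ℝ => f (t - v)) :=
    (measurePreserving_sub_right volume v).quasiMeasurePreserving.ae_eq_comp h2
  filter_upwards [h1.trans h3, h2] with a ha1 ha2
  simp only [RCLike.inner_apply, ha1, ha2, mul_comm]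

lemma Integrable.conj' {f : ℝ → ℂ} (hf : Integrable f (volume : Measure ℝ)) :
    Integrable (fun u : ℝ => (starRingEnd ℂ) (f u)) (volume : Measure ℝ) := by
  refine ⟨Complex.continuous_conj.comp_aestronglyMeasurable hf.1, ?_⟩
  simpa [HasFiniteIntegral] using hf.2

lemma integrable_autocorr {f : ℝ → ℂ} (hf1 : Integrable f (volume : Measure ℝ)) :
    Integrable (fun v : ℝ => ∫ t : ℝ, f t * (starRingEnd ℂ) (f (t - v)))
      (volume : Measure ℝ) := by
  have hg : Integrable (fun u : ℝ => (starRingEnd ℂ) (f (-u))) (volume : Measure ℝ) :=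
    Integrable.conj' hf1.comp_neg
  have := hf1.integrable_convolution (ContinuousLinearMap.mul ℂ ℂ) hg
  refine this.congr (Filter.Eventually.of_forall fun v => ?_)
  simp only [convolution_def, ContinuousLinearMap.mul_apply']
  congr 1 with t
  congr 2
  ring_nf
lemma integrable_autocorr_integrand {f : ℝ → ℂ} (hf1 : Integrable f (volume : Measure ℝ))
    (ν : ℝ) :
    Integrable (fun p : ℝ × ℝ => Complex.exp (↑(-2 * π * p.1 * ν) * Complex.I) *
      (f p.2 * (starRingEnd ℂ) (f (p.2 - p.1))))
      ((volume : Measure ℝ).prod (volume : Measure ℝ)) := by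
  have hg : Integrable (fun u : ℝ => (starRingEnd ℂ) (f (-u))) (volume : Measure ℝ) :=
    Integrable.conj' hf1.comp_neg
  have H := hf1.convolution_integrand (ContinuousLinearMap.mul ℂ ℂ) hg
  have H' : Integrable (fun p : ℝ × ℝ => f p.2 * (starRingEnd ℂ) (f (p.2 - p.1)))
      ((volume : Measure ℝ).prod (volume : Measure ℝ)) := by
    refine H.congr (Filter.Eventually.of_forall fun p => ?_)
    simp only [ContinuousLinearMap.mul_apply']
    congr 2
    ring_nf
  refine H'.bdd_mul (c := 1) ?_ (Filter.Eventually.of_forall fun p => ?_)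
  · exact (Complex.continuous_exp.comp (by fun_prop)).aestronglyMeasurable
  · rw [Complex.norm_exp]
    simp
lemma fourier_autocorr {f : ℝ → ℂ} (hf1 : Integrable f (volume : Measure ℝ)) (ν : ℝ) :
    𝓕 (fun v : ℝ => ∫ t : ℝ, f t * (starRingEnd ℂ) (f (t - v))) ν
      = ((‖𝓕 f ν‖ ^ 2 : ℝ) : ℂ) := by
  rw [Real.fourier_real_eq_integral_exp_smul]
  simp_rw [smul_eq_mul, ← integral_const_mul]
  rw [integral_integral_swap (integrable_autocorr_integrand hf1 ν)]
  have key : ∀ t : ℝ, (∫ v : ℝ, Complex.exp (↑(-2 * π * v * ν) * Complex.I) *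
      (f t * (starRingEnd ℂ) (f (t - v))))
      = f t * Complex.exp (↑(-2 * π * t * ν) * Complex.I) * (starRingEnd ℂ) (𝓕 f ν) := by
    intro t
    have h1 : ∀ v : ℝ, Complex.exp (↑(-2 * π * v * ν) * Complex.I) *
        (f t * (starRingEnd ℂ) (f (t - v)))
        = f t * (Complex.exp (↑(-2 * π * v * ν) * Complex.I) *
            (starRingEnd ℂ) (f (t - v))) := fun v => by ring
    simp_rw [h1]
    rw [integral_const_mul]
    have h2 : (∫ v : ℝ, Complex.exp (↑(-2 * π * v * ν) * Complex.I) *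
        (starRingEnd ℂ) (f (t - v)))
        = ∫ s : ℝ, Complex.exp (↑(-2 * π * (t - s) * ν) * Complex.I) *
            (starRingEnd ℂ) (f s) := by
      rw [← integral_sub_left_eq_self
        (fun v : ℝ => Complex.exp (↑(-2 * π * v * ν) * Complex.I) *
          (starRingEnd ℂ) (f (t - v))) volume t]
      congr 1 with s
      congr 2
      simp [sub_sub_cancel]
    rw [h2]
    have h5 : (∫ s : ℝ, Complex.exp (↑(-2 * π * s * ν) * Complex.I) * f s) = 𝓕 f ν := by
      rw [Real.fourier_real_eq_integral_exp_smul]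
      simp_rw [smul_eq_mul]
    have h3 : ∀ s : ℝ, Complex.exp (↑(-2 * π * (t - s) * ν) * Complex.I) *
        (starRingEnd ℂ) (f s)
        = Complex.exp (↑(-2 * π * t * ν) * Complex.I) *
          (starRingEnd ℂ) (Complex.exp (↑(-2 * π * s * ν) * Complex.I) * f s) := by
      intro s
      rw [map_mul, ← Complex.exp_conj, ← mul_assoc, ← Complex.exp_add]
      congr 2
      simp only [map_mul, Complex.conj_ofReal, Complex.conj_I]
      push_cast
      ring
    simp_rw [h3]
    rw [integral_const_mul, integral_conj, h5]
    ring
  simp_rw [key]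
  have h4 : ∀ t : ℝ, f t * Complex.exp (↑(-2 * π * t * ν) * Complex.I) *
      (starRingEnd ℂ) (𝓕 f ν)
      = (Complex.exp (↑(-2 * π * t * ν) * Complex.I) * f t) * (starRingEnd ℂ) (𝓕 f ν) :=
    fun t => by ring
  simp_rw [h4]
  rw [integral_mul_const]
  have h5 : (∫ t : ℝ, Complex.exp (↑(-2 * π * t * ν) * Complex.I) * f t) = 𝓕 f ν := by
    rw [Real.fourier_real_eq_integral_exp_smul]
    simp_rw [smul_eq_mul]
  rw [h5, Complex.mul_conj]
  norm_cast
  rw [Complex.normSq_eq_norm_sq]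







lemma plancherel_L1_L2 {f : ℝ → ℂ} (hf1 : Integrable f (volume : Measure ℝ))
    (hf2 : MemLp f 2 (volume : Measure ℝ)) :
    (∫ ν : ℝ, ‖𝓕 f ν‖ ^ 2) = ∫ t : ℝ, ‖f t‖ ^ 2 := by
  set h : ℝ → ℂ := fun v => ∫ t : ℝ, f t * (starRingEnd ℂ) (f (t - v)) with hh
  have hInt : Integrable h volume := integrable_autocorr hf1
  have hCont : Continuous h := continuous_autocorr hf2
  -- value at 0
  have h0 : h 0 = ((∫ t : ℝ, ‖f t‖ ^ 2 : ℝ) : ℂ) := by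
    rw [hh]
    simp only [sub_zero]
    calc (∫ t : ℝ, f t * (starRingEnd ℂ) (f t))
        = ∫ t : ℝ, ((‖f t‖ ^ 2 : ℝ) : ℂ) := by
          congr 1 with t
          rw [Complex.mul_conj, Complex.normSq_eq_norm_sq]
      _ = ((∫ t : ℝ, ‖f t‖ ^ 2 : ℝ) : ℂ) := integral_ofReal
  -- Gaussian limit on the space side
  have T1 := Real.tendsto_integral_gaussian_smul' hInt (hCont.continuousAt (x := (0:ℝ)))
  -- identify the integral for c > 0 with the frequency side
  have key : ∀ c : ℝ, 0 < c →
      (∫ w : ℝ, (((π : ℂ) * c) ^ (Module.finrank ℝ ℝ / 2 : ℂ) *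
          Complex.exp (-(π : ℂ) ^ 2 * c * (‖(0:ℝ) - w‖ : ℂ) ^ 2)) • h w)
        = ((∫ w : ℝ, Real.exp (-c⁻¹ * w ^ 2) * ‖𝓕 f w‖ ^ 2 : ℝ) : ℂ) := by
    intro c hc
    have hbre : (0:ℝ) < ((c : ℂ)⁻¹).re := by
      simp [Complex.inv_re, Complex.normSq_ofReal]
      positivity
    have hJ : Integrable (fun w : ℝ => Complex.exp (-(c : ℂ)⁻¹ * ‖w‖ ^ 2)) volume := by
      simpa using GaussianFourier.integrable_cexp_neg_mul_sq_norm_add (V := ℝ) hbre 0 0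
    have flip := VectorFourier.integral_fourierIntegral_smul_eq_flip (L := innerₗ ℝ)
      Real.continuous_fourierChar continuous_inner hJ hInt
    have hgauss : ∀ w : ℝ,
        VectorFourier.fourierIntegral 𝐞 volume (innerₗ ℝ)
          (fun v : ℝ => Complex.exp (-(c : ℂ)⁻¹ * ‖v‖ ^ 2)) w
          = ((π : ℂ) * c) ^ (Module.finrank ℝ ℝ / 2 : ℂ) *
              Complex.exp (-(π : ℂ) ^ 2 * c * (‖(0:ℝ) - w‖ : ℂ) ^ 2) := by
      intro w
      have := fourier_gaussian_innerProductSpace (V := ℝ) (b := (c : ℂ)⁻¹) hbre w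
      change 𝓕 (fun v : ℝ => Complex.exp (-(c : ℂ)⁻¹ * ‖v‖ ^ 2)) w = _
      rw [this]
      have hc0 : (c : ℂ) ≠ 0 := by exact_mod_cast hc.ne'
      congr 1
      · rw [div_eq_mul_inv, inv_inv]
      · congr 1
        rw [div_eq_mul_inv, inv_inv]
        simp only [zero_sub, norm_neg]
        ring
    calc (∫ w : ℝ, (((π : ℂ) * c) ^ (Module.finrank ℝ ℝ / 2 : ℂ) *
            Complex.exp (-(π : ℂ) ^ 2 * c * (‖(0:ℝ) - w‖ : ℂ) ^ 2)) • h w)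
        = ∫ ξ : ℝ, VectorFourier.fourierIntegral 𝐞 volume (innerₗ ℝ)
            (fun v : ℝ => Complex.exp (-(c : ℂ)⁻¹ * ‖v‖ ^ 2)) ξ • h ξ := by
          congr 1 with ξ
          rw [hgauss]
      _ = ∫ w : ℝ, Complex.exp (-(c : ℂ)⁻¹ * ‖w‖ ^ 2) •
            VectorFourier.fourierIntegral 𝐞 volume (innerₗ ℝ).flip h w := flip
      _ = ∫ w : ℝ, ((Real.exp (-c⁻¹ * w ^ 2) * ‖𝓕 f w‖ ^ 2 : ℝ) : ℂ) := by
          congr 1 with w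
          have hflip : VectorFourier.fourierIntegral 𝐞 volume (innerₗ ℝ).flip h w
              = 𝓕 h w := by
            show _ = VectorFourier.fourierIntegral 𝐞 volume (innerₗ ℝ) h w
            unfold VectorFourier.fourierIntegral
            congr 1 with v
            congr 2
            simp [LinearMap.flip_apply, real_inner_comm]
          rw [hflip, fourier_autocorr hf1 w, smul_eq_mul]
          have : Complex.exp (-(c : ℂ)⁻¹ * (‖w‖ : ℂ) ^ 2)
              = ((Real.exp (-c⁻¹ * w ^ 2) : ℝ) : ℂ) := by
            rw [Complex.ofReal_exp]
            congr 1
            rw [Real.norm_eq_abs]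
            norm_cast
            rw [_root_.sq_abs]
          rw [this]
          norm_cast
      _ = ((∫ w : ℝ, Real.exp (-c⁻¹ * w ^ 2) * ‖𝓕 f w‖ ^ 2 : ℝ) : ℂ) :=
          integral_ofReal (f := fun w : ℝ => Real.exp (-c⁻¹ * w ^ 2) * ‖𝓕 f w‖ ^ 2)
  -- pass to the real-valued limit
  have hseq : Tendsto (fun n : ℕ => ((n : ℝ) + 1)) atTop atTop :=
    tendsto_atTop_add_const_right _ 1 tendsto_natCast_atTop_atTop
  have T2 : Tendsto (fun c : ℝ =>
      ((∫ w : ℝ, Real.exp (-c⁻¹ * w ^ 2) * ‖𝓕 f w‖ ^ 2 : ℝ) : ℂ)) atTop (𝓝 (h 0)) := by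
    refine T1.congr' ?_
    filter_upwards [Ioi_mem_atTop (0:ℝ)] with c (hc : 0 < c)
    exact key c hc
  have T3 : Tendsto (fun c : ℝ =>
      ∫ w : ℝ, Real.exp (-c⁻¹ * w ^ 2) * ‖𝓕 f w‖ ^ 2) atTop
      (𝓝 (∫ t : ℝ, ‖f t‖ ^ 2)) := by
    have := (Complex.continuous_re.tendsto _).comp T2
    simpa [h0, Function.comp_def] using this
  -- MCT
  have hFcont : Continuous (𝓕 f) :=
    VectorFourier.fourierIntegral_continuous Real.continuous_fourierChar continuous_inner hf1
  have hFbdd : ∀ w : ℝ, ‖𝓕 f w‖ ≤ ∫ t : ℝ, ‖f t‖ := fun w =>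
    VectorFourier.norm_fourierIntegral_le_integral_norm _ _ _ _ _
  have hIntn : ∀ n : ℕ, Integrable
      (fun w : ℝ => Real.exp (-((n:ℝ)+1)⁻¹ * w ^ 2) * ‖𝓕 f w‖ ^ 2) volume := by
    intro n
    have hpos : (0:ℝ) < ((n:ℝ)+1)⁻¹ := by positivity
    refine Integrable.mono' ((integrable_exp_neg_mul_sq hpos).mul_const
      ((∫ t : ℝ, ‖f t‖) ^ 2)) ?_ ?_
    · exact ((Real.continuous_exp.comp (by fun_prop)).mul
        ((hFcont.norm).pow 2)).aestronglyMeasurable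
    · filter_upwards with w
      rw [Real.norm_of_nonneg (by positivity)]
      exact mul_le_mul_of_nonneg_left
        (pow_le_pow_left₀ (norm_nonneg _) (hFbdd w) 2) (Real.exp_nonneg _)
  have mct := lintegral_tendsto_of_tendsto_of_monotone
    (f := fun (n : ℕ) (w : ℝ) =>
      ENNReal.ofReal (Real.exp (-((n:ℝ)+1)⁻¹ * w ^ 2) * ‖𝓕 f w‖ ^ 2))
    (F := fun w : ℝ => ENNReal.ofReal (‖𝓕 f w‖ ^ 2))
    (fun n => (hIntn n).aemeasurable.ennreal_ofReal)
    (by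
      filter_upwards with w
      intro m n hmn
      apply ENNReal.ofReal_le_ofReal
      apply mul_le_mul_of_nonneg_right _ (by positivity)
      apply Real.exp_le_exp.2
      rw [neg_mul, neg_mul, neg_le_neg_iff]
      apply mul_le_mul_of_nonneg_right _ (sq_nonneg w)
      apply inv_anti₀ (by positivity)
      exact_mod_cast Nat.succ_le_succ hmn)
    (by
      filter_upwards with w
      have hexp : Tendsto (fun n : ℕ => Real.exp (-((n:ℝ)+1)⁻¹ * w ^ 2)) atTop (𝓝 1) := by
        have h1 : Tendsto (fun n : ℕ => -((n:ℝ)+1)⁻¹ * w ^ 2) atTop (𝓝 0) := by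
          have := (tendsto_inv_atTop_zero.comp hseq).neg.mul_const (w ^ 2)
          simpa using this
        simpa [Function.comp_def] using (Real.continuous_exp.tendsto 0).comp h1
      have := (hexp.mul_const (‖𝓕 f w‖ ^ 2))
      rw [one_mul] at this
      exact (ENNReal.continuous_ofReal.tendsto _).comp this)
  have eqn : ∀ n : ℕ, (∫⁻ w : ℝ,
      ENNReal.ofReal (Real.exp (-((n:ℝ)+1)⁻¹ * w ^ 2) * ‖𝓕 f w‖ ^ 2))
      = ENNReal.ofReal (∫ w : ℝ, Real.exp (-((n:ℝ)+1)⁻¹ * w ^ 2) * ‖𝓕 f w‖ ^ 2) := by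
    intro n
    rw [← ofReal_integral_eq_lintegral_ofReal (hIntn n)]
    filter_upwards with w
    positivity
  rw [funext eqn] at mct
  have lim2 : Tendsto (fun n : ℕ =>
      ENNReal.ofReal (∫ w : ℝ, Real.exp (-((n:ℝ)+1)⁻¹ * w ^ 2) * ‖𝓕 f w‖ ^ 2)) atTop
      (𝓝 (ENNReal.ofReal (∫ t : ℝ, ‖f t‖ ^ 2))) := by
    have h1 : Tendsto (fun n : ℕ =>
        ∫ w : ℝ, Real.exp (-(((n:ℝ)+1))⁻¹ * w ^ 2) * ‖𝓕 f w‖ ^ 2) atTop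
        (𝓝 (∫ t : ℝ, ‖f t‖ ^ 2)) := T3.comp hseq
    exact (ENNReal.continuous_ofReal.tendsto _).comp h1
  have E1 : (∫⁻ w : ℝ, ENNReal.ofReal (‖𝓕 f w‖ ^ 2))
      = ENNReal.ofReal (∫ t : ℝ, ‖f t‖ ^ 2) := tendsto_nhds_unique mct lim2
  rw [integral_eq_lintegral_of_nonneg_ae (f := fun w => ‖𝓕 f w‖ ^ 2)
    (Filter.Eventually.of_forall fun w => by positivity)
    ((hFcont.norm.pow 2).aestronglyMeasurable), E1,
    ENNReal.toReal_ofReal (integral_nonneg fun t => by positivity)]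
/-- Moyal identity: for `x, ψ ∈ L²(ℝ)`,
`∫∫ |V_ψx(τ,ν)|² dν dτ = ‖x‖² ‖ψ‖²`. -/
theorem moyal_identity
    (x ψ : ℝ → ℂ) (hx : MemLp x 2 (volume : Measure ℝ))
    (hψ : MemLp ψ 2 (volume : Measure ℝ)) :
    (∫ τ : ℝ, ∫ ν : ℝ, ‖stft ψ x τ ν‖ ^ 2) =
      (∫ t : ℝ, ‖x t‖ ^ 2) * ∫ t : ℝ, ‖ψ t‖ ^ 2 := by
  set F : ℝ → ℝ → ℂ := fun τ t => x t * (starRingEnd ℂ) (ψ (t - τ)) with hF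
  have hMem : ∀ τ, MemLp (fun t => (starRingEnd ℂ) (ψ (t - τ))) 2 (volume : Measure ℝ) :=
    fun τ => memLp_conj (memLp_shift hψ τ)
  have hInt : ∀ τ, Integrable (F τ) volume := fun τ => integrable_mul_L2 hx (hMem τ)
  -- stft is the Fourier transform of F τ
  have hstft : ∀ τ ν, stft ψ x τ ν = 𝓕 (F τ) ν := by
    intro τ ν
    rw [stft, Real.fourier_real_eq_integral_exp_smul]
    congr 1 with t
    rw [smul_eq_mul, mul_comm]
    congr 2
    push_cast
    ring
  -- norms
  have hQ : ∀ τ t, ‖F τ t‖ ^ 2 = ‖x t‖ ^ 2 * ‖ψ (t - τ)‖ ^ 2 := by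
    intro τ t
    rw [hF]
    simp [norm_mul, mul_pow]
  -- square-norm integrability on the product space
  have hx2 : Integrable (fun t : ℝ => ‖x t‖ ^ 2) volume :=
    (memLp_two_iff_integrable_sq_norm hx.1).1 hx
  have hψ2 : Integrable (fun t : ℝ => ‖ψ t‖ ^ 2) volume :=
    (memLp_two_iff_integrable_sq_norm hψ.1).1 hψ
  have hψ2n : Integrable (fun u : ℝ => ‖ψ (-u)‖ ^ 2) volume := hψ2.comp_neg
  have hProd : Integrable (fun p : ℝ × ℝ => ‖x p.2‖ ^ 2 * ‖ψ (p.2 - p.1)‖ ^ 2)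
      ((volume : Measure ℝ).prod (volume : Measure ℝ)) := by
    have H := hx2.convolution_integrand (ContinuousLinearMap.mul ℝ ℝ) hψ2n
    refine H.congr (Filter.Eventually.of_forall fun p => ?_)
    simp only [ContinuousLinearMap.mul_apply']
    congr 2
    ring_nf
  -- a.e. membership in L²
  have hae : ∀ᵐ τ : ℝ, MemLp (F τ) 2 (volume : Measure ℝ) := by
    have := ((integrable_prod_iff hProd.1).1 hProd).1
    filter_upwards [this] with τ hτ
    refine (memLp_two_iff_integrable_sq_norm (hInt τ).1).2 ?_
    refine hτ.congr (Filter.Eventually.of_forall fun t => ?_)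
    exact (hQ τ t).symm
  -- identify the inner integral a.e.
  have hinner : (fun τ : ℝ => ∫ ν : ℝ, ‖stft ψ x τ ν‖ ^ 2)
      =ᵐ[volume] fun τ : ℝ => ∫ t : ℝ, ‖x t‖ ^ 2 * ‖ψ (t - τ)‖ ^ 2 := by
    filter_upwards [hae] with τ hτ
    have : (∫ ν : ℝ, ‖stft ψ x τ ν‖ ^ 2) = ∫ ν : ℝ, ‖𝓕 (F τ) ν‖ ^ 2 := by
      congr 1 with ν
      rw [hstft]
    rw [this, plancherel_L1_L2 (hInt τ) hτ]
    exact integral_congr_ae (Filter.Eventually.of_forall fun t => hQ τ t)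
  rw [integral_congr_ae hinner]
  rw [integral_integral_swap (f := fun τ t => ‖x t‖ ^ 2 * ‖ψ (t - τ)‖ ^ 2) hProd]
  have : ∀ t : ℝ, (∫ τ : ℝ, ‖x t‖ ^ 2 * ‖ψ (t - τ)‖ ^ 2) = ‖x t‖ ^ 2 * ∫ t : ℝ, ‖ψ t‖ ^ 2 := by
    intro t
    rw [integral_const_mul]
    congr 1
    exact integral_sub_left_eq_self (fun u : ℝ => ‖ψ u‖ ^ 2) volume t
  simp_rw [this]
  rw [integral_mul_const]
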